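/- For every even integer m ≥ 0 and every x > 0, e^{x²}∫_x^∞ e^{-t²} dt < Σ_{k=0}^m (−1)^k x^{−(2k+1)}·(1/2)·(1/2)_k; and for every odd m ≥ 1 and every x > 0, e^{x²}∫_x^∞ e^{-t²} dt > Σ_{k=0}^m (−1)^k x^{−(2k+1)}·(1/2)·(1/2)_k. -/

import Mathlib

open MeasureTheory Real Finset Filter Set

/-- Pochhammer symbol `(a)_n = a(a+1)⋯(a+n−1)`. -/
noncomputable def poch (a : ℝ) (n : ℕ) : ℝ := ∏ i ∈ Finset.range n, (a + i)

/-- The scaled Gaussian tail `g(x) = e^{x²} ∫_x^∞ e^{-t²} dt`. -/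
noncomputable def gTail (x : ℝ) : ℝ :=
  Real.exp (x ^ 2) * ∫ t in Set.Ioi x, Real.exp (-t ^ 2)


noncomputable def T (x : ℝ) : ℝ := ∫ t in Set.Ioi x, Real.exp (-t ^ 2)

lemma integrable_g : Integrable (fun t : ℝ => Real.exp (-t ^ 2)) := by
  have := integrable_exp_neg_mul_sq (b := 1) one_pos
  simpa using this

lemma cont_g : Continuous (fun t : ℝ => Real.exp (-t ^ 2)) := by
  continuity

lemma T_split (x : ℝ) : T x = T 0 - ∫ t in (0:ℝ)..x, Real.exp (-t ^ 2) := by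
  rcases le_total 0 x with h | h
  · rw [intervalIntegral.integral_of_le h]
    have : T 0 = (∫ t in Set.Ioc 0 x, Real.exp (-t ^ 2)) + T x := by
      rw [T, T, ← setIntegral_union]
      · rw [Set.Ioc_union_Ioi_eq_Ioi h]
      · exact Set.Ioc_disjoint_Ioi le_rfl
      · exact measurableSet_Ioi
      · exact integrable_g.integrableOn
      · exact integrable_g.integrableOn
    rw [this]; ring
  · rw [intervalIntegral.integral_of_ge h]
    have : T x = (∫ t in Set.Ioc x 0, Real.exp (-t ^ 2)) + T 0 := by
      rw [T, T, ← setIntegral_union]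
      · rw [Set.Ioc_union_Ioi_eq_Ioi h]
      · exact Set.Ioc_disjoint_Ioi le_rfl
      · exact measurableSet_Ioi
      · exact integrable_g.integrableOn
      · exact integrable_g.integrableOn
    rw [this]; ring

lemma T_hasDeriv (x : ℝ) : HasDerivAt T (-Real.exp (-x ^ 2)) x := by
  have h := (cont_g.integral_hasStrictDerivAt 0 x).hasDerivAt
  have : HasDerivAt (fun y => T 0 - ∫ t in (0:ℝ)..y, Real.exp (-t ^ 2))
      (-Real.exp (-x ^ 2)) x := by
    simpa using (h.const_sub (T 0))
  exact this.congr_deriv rfl |>.congr_of_eventuallyEq (Eventually.of_forall fun y => (T_split y))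

lemma T_tendsto : Tendsto T atTop (nhds 0) := by
  have h := intervalIntegral_tendsto_integral_Ioi 0 integrable_g.integrableOn tendsto_id
  have : Tendsto (fun x => T 0 - ∫ t in (0:ℝ)..x, Real.exp (-t ^ 2)) atTop (nhds (T 0 - T 0)) :=
    tendsto_const_nhds.sub h
  simpa [← T_split, sub_self] using this

noncomputable def c (k : ℕ) : ℝ := (1 / 2) * poch (1 / 2) k

lemma c_succ (k : ℕ) : 2 * c (k + 1) = (2 * k + 1) * c k := by
  simp only [c, poch, Finset.prod_range_succ]
  ring

lemma c_pos (k : ℕ) : 0 < c k := by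
  have : 0 < poch (1/2) k := Finset.prod_pos fun i _ => by positivity
  simp only [c]; positivity

noncomputable def S (m : ℕ) (x : ℝ) : ℝ :=
  ∑ k ∈ Finset.range (m + 1), (-1 : ℝ) ^ k * c k * (x⁻¹) ^ (2 * k + 1)

lemma term_hasDeriv (k : ℕ) {x : ℝ} (hx : x ≠ 0) :
    HasDerivAt (fun y : ℝ => Real.exp (-y ^ 2) * ((-1 : ℝ) ^ k * c k * (y⁻¹) ^ (2 * k + 1)))
      (Real.exp (-x ^ 2) * ((-1 : ℝ) ^ k * c k *
        ((2 * k + 1) * (x⁻¹) ^ (2 * k) * (-(x⁻¹ ^ 2)))) +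
       (-(2 * x) * Real.exp (-x ^ 2)) * ((-1 : ℝ) ^ k * c k * (x⁻¹) ^ (2 * k + 1))) x := by
  have he : HasDerivAt (fun y : ℝ => Real.exp (-y ^ 2)) (-(2 * x) * Real.exp (-x ^ 2)) x := by
    have h1 : HasDerivAt (fun y : ℝ => -y ^ 2) (-(2 * x)) x := by
      simpa using ((hasDerivAt_pow 2 x).fun_neg)
    simpa [mul_comm] using h1.exp
  have hp : HasDerivAt (fun y : ℝ => (y⁻¹) ^ (2 * k + 1))
      ((2 * k + 1) * (x⁻¹) ^ (2 * k) * (-(x⁻¹ ^ 2))) x := by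
    have := (hasDerivAt_inv hx).fun_pow (2 * k + 1)
    simpa [Nat.add_sub_cancel, mul_comm, mul_assoc, mul_left_comm] using this
  have := he.mul ((hp.const_mul ((-1 : ℝ) ^ k * c k)))
  refine this.congr_deriv (Eq.symm ?_)
  ring

lemma eS_hasDeriv (m : ℕ) {x : ℝ} (hx : x ≠ 0) :
    HasDerivAt (fun y : ℝ => Real.exp (-y ^ 2) * S m y)
      (Real.exp (-x ^ 2) * ((-1 : ℝ) ^ (m + 1) * (2 * m + 1) * c m * (x⁻¹) ^ (2 * m + 2) - 1))
      x := by
  have hxx : x * x⁻¹ = 1 := mul_inv_cancel₀ hx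
  induction m with
  | zero =>
      have h := term_hasDeriv 0 hx
      have hfun : (fun y : ℝ => Real.exp (-y ^ 2) *
          ((-1 : ℝ) ^ 0 * c 0 * (y⁻¹) ^ (2 * 0 + 1))) =
          (fun y : ℝ => Real.exp (-y ^ 2) * S 0 y) := by
        funext y; simp [S]
      rw [hfun] at h
      convert h using 1
      have hc : c 0 = 1 / 2 := by simp [c, poch]
      simp only [hc]
      field_simp
      linear_combination (-(x*x⁻¹+1) + 2*x^2) * hxx
  | succ n ih =>
      have h := ih.fun_add (term_hasDeriv (n + 1) hx)
      have hfun : (fun y : ℝ => Real.exp (-y ^ 2) * S n y +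
          Real.exp (-y ^ 2) * ((-1 : ℝ) ^ (n + 1) * c (n + 1) * (y⁻¹) ^ (2 * (n + 1) + 1))) =
          (fun y : ℝ => Real.exp (-y ^ 2) * S (n + 1) y) := by
        funext y
        simp only [S, Finset.sum_range_succ]
        ring
      rw [hfun] at h
      refine h.congr_deriv (Eq.symm ?_)
      have hcs := c_succ n
      have hp1 : (x⁻¹ : ℝ) ^ (2 * (n + 1) + 1) = x⁻¹ ^ (2 * n + 2) * x⁻¹ := by ring
      have hp2 : (x⁻¹ : ℝ) ^ (2 * (n + 1)) = x⁻¹ ^ (2 * n + 2) := by ring_nf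
      have hp3 : (x⁻¹ : ℝ) ^ (2 * (n + 1) + 2) = x⁻¹ ^ (2 * n + 2) * x⁻¹ ^ 2 := by ring
      rw [hp1, hp2, hp3]
      push_cast
      linear_combination (Real.exp (-x ^ 2) * ((-1:ℝ))^(n+1) * (x⁻¹)^(2*n+2)) * hcs +
        (2 * Real.exp (-x ^ 2) * ((-1:ℝ))^(n+1) * c (n+1) * (x⁻¹)^(2*n+2)) * hxx

noncomputable def F (m : ℕ) (x : ℝ) : ℝ := (-1 : ℝ) ^ m * (Real.exp (-x ^ 2) * S m x - T x)

lemma F_hasDeriv (m : ℕ) {x : ℝ} (hx : 0 < x) :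
    HasDerivAt (F m) (-(Real.exp (-x ^ 2) * (2 * m + 1) * c m * (x⁻¹) ^ (2 * m + 2))) x := by
  have h := ((eS_hasDeriv m hx.ne').fun_sub (T_hasDeriv x)).const_mul ((-1 : ℝ) ^ m)
  refine h.congr_deriv (Eq.symm ?_)
  have hmm : ((-1 : ℝ)) ^ m * (-1 : ℝ) ^ (m + 1) = -1 := by
    rw [← pow_add]
    exact Odd.neg_one_pow ⟨m, by ring⟩
  have : ((-1 : ℝ)) ^ m * ((Real.exp (-x ^ 2) *
      ((-1 : ℝ) ^ (m + 1) * (2 * m + 1) * c m * (x⁻¹) ^ (2 * m + 2) - 1)) - -Real.exp (-x ^ 2))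
      = ((-1:ℝ)^m * (-1:ℝ)^(m+1)) * (Real.exp (-x ^ 2) * (2 * m + 1) * c m * (x⁻¹) ^ (2 * m + 2)) := by
    ring
  rw [this, hmm]
  ring

lemma F_deriv_neg (m : ℕ) {x : ℝ} (hx : 0 < x) : deriv (F m) x < 0 := by
  rw [(F_hasDeriv m hx).deriv]
  have h1 : (0:ℝ) < Real.exp (-x ^ 2) * (2 * m + 1) * c m * (x⁻¹) ^ (2 * m + 2) := by
    have := c_pos m
    have hxi : (0:ℝ) < x⁻¹ := inv_pos.2 hx
    positivity
  linarith

lemma F_strictAnti (m : ℕ) : StrictAntiOn (F m) (Set.Ioi 0) := by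
  apply strictAntiOn_of_deriv_neg (convex_Ioi 0)
  · intro x hx
    exact ((F_hasDeriv m hx).continuousAt).continuousWithinAt
  · intro x hx
    rw [interior_Ioi] at hx
    exact F_deriv_neg m hx

lemma F_tendsto (m : ℕ) : Tendsto (F m) atTop (nhds 0) := by
  have hexp : Tendsto (fun x : ℝ => Real.exp (-x ^ 2)) atTop (nhds 0) := by
    apply Real.tendsto_exp_atBot.comp
    have : Tendsto (fun x : ℝ => x ^ 2) atTop atTop := tendsto_pow_atTop (by norm_num)
    exact tendsto_neg_atTop_atBot.comp this
  have hS : Tendsto (fun x : ℝ => S m x) atTop (nhds 0) := by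
    have : Tendsto (fun x : ℝ => S m x) atTop
        (nhds (∑ k ∈ Finset.range (m + 1), (0:ℝ))) := by
      apply tendsto_finset_sum
      intro k _
      have h1 : Tendsto (fun x : ℝ => (x⁻¹) ^ (2 * k + 1)) atTop (nhds 0) := by
        have := tendsto_inv_atTop_zero (𝕜 := ℝ)
        have h2 := this.pow (2 * k + 1)
        simpa using h2
      have := h1.const_mul ((-1 : ℝ) ^ k * c k)
      simpa using this
    simpa using this
  have h1 : Tendsto (fun x : ℝ => Real.exp (-x ^ 2) * S m x - T x) atTop (nhds (0 * 0 - 0)) :=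
    (hexp.mul hS).sub T_tendsto
  have h2 := h1.const_mul ((-1 : ℝ) ^ m)
  simp only [mul_zero, sub_zero] at h2; exact h2

lemma F_pos (m : ℕ) {x : ℝ} (hx : 0 < x) : 0 < F m x := by
  have hlt : F m (x + 1) < F m x :=
    F_strictAnti m hx (by simp; linarith) (by linarith)
  have hge : 0 ≤ F m (x + 1) := by
    apply le_of_tendsto (F_tendsto m)
    filter_upwards [eventually_ge_atTop (x + 1)] with y hy
    rcases eq_or_lt_of_le hy with h | h
    · exact le_of_eq (by rw [h])
    · exact le_of_lt (F_strictAnti m (by simp; linarith) (by simp; linarith) h)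
  linarith


lemma gaussian_tail_eq (x : ℝ) : gTail x = Real.exp (x ^ 2) * T x := rfl

lemma sum_eq_S (m : ℕ) (x : ℝ) :
    (∑ k ∈ Finset.range (m + 1),
      (-1 : ℝ) ^ k * (x ^ (2 * k + 1))⁻¹ * (1 / 2) * poch (1 / 2) k) = S m x := by
  unfold S
  apply Finset.sum_congr rfl
  intro k _
  rw [inv_pow]
  unfold c
  ring

theorem gaussian_tail_asymptotic_alternating :
    (∀ m : ℕ, Even m → ∀ x : ℝ, 0 < x →
      gTail x < ∑ k ∈ Finset.range (m + 1),
        (-1 : ℝ) ^ k * (x ^ (2 * k + 1))⁻¹ * (1 / 2) * poch (1 / 2) k) ∧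
    (∀ m : ℕ, Odd m → ∀ x : ℝ, 0 < x →
      gTail x > ∑ k ∈ Finset.range (m + 1),
        (-1 : ℝ) ^ k * (x ^ (2 * k + 1))⁻¹ * (1 / 2) * poch (1 / 2) k) := by
  have he : ∀ x : ℝ, Real.exp (x ^ 2) * Real.exp (-x ^ 2) = 1 := fun x => by
    rw [← Real.exp_add]; simp
  constructor
  · intro m hm x hx
    have hF := F_pos m hx
    rw [F, hm.neg_one_pow, one_mul] at hF
    rw [gaussian_tail_eq, sum_eq_S]
    have h1 : Real.exp (x ^ 2) * T x < Real.exp (x ^ 2) * (Real.exp (-x ^ 2) * S m x) := by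
      apply mul_lt_mul_of_pos_left _ (Real.exp_pos _)
      linarith
    calc Real.exp (x ^ 2) * T x < Real.exp (x ^ 2) * (Real.exp (-x ^ 2) * S m x) := h1
      _ = S m x := by rw [← mul_assoc, he, one_mul]
  · intro m hm x hx
    have hF := F_pos m hx
    rw [F, hm.neg_one_pow, neg_one_mul, neg_pos] at hF
    rw [gaussian_tail_eq, sum_eq_S]
    have h1 : Real.exp (x ^ 2) * (Real.exp (-x ^ 2) * S m x) < Real.exp (x ^ 2) * T x := by
      apply mul_lt_mul_of_pos_left _ (Real.exp_pos _)
      linarith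
    calc S m x = Real.exp (x ^ 2) * (Real.exp (-x ^ 2) * S m x) := by
          rw [← mul_assoc, he, one_mul]
      _ < Real.exp (x ^ 2) * T x := h1
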